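/- Let A be a finite abelian group with a nondegenerate quadratic function q. If (B,β) and (B',β') are Schellekens pairs for (A,q) with Γ(B,β) = Γ(B',β') as subgroups of A × A, then B = B' and β = β'. In other words, the assignment (B,β) ↦ Γ(B,β) is injective on Schellekens pairs. -/

import Mathlib

/-- The bicharacter `σ(a,b) = q(ab) q(a)⁻¹ q(b)⁻¹` associated to `q`. -/
def qSigma {A : Type*} [CommGroup A] (q : A → ℂˣ) (a b : A) : ℂˣ :=
  q (a * b) * (q a)⁻¹ * (q b)⁻¹

/-- `q` is a quadratic function: `q(a⁻¹) = q(a)` and the associated `σ` is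
multiplicative in each argument. -/
def IsQuadratic {A : Type*} [CommGroup A] (q : A → ℂˣ) : Prop :=
  (∀ a : A, q a⁻¹ = q a) ∧
  (∀ a b c : A, qSigma q (a * b) c = qSigma q a c * qSigma q b c) ∧
  (∀ a b c : A, qSigma q a (b * c) = qSigma q a b * qSigma q a c)

/-- `q` is nondegenerate: for every `a ≠ 1` the homomorphism `σ(a,−)` is nontrivial. -/
def IsNondeg {A : Type*} [CommGroup A] (q : A → ℂˣ) : Prop :=
  ∀ a : A, a ≠ 1 → ∃ b : A, qSigma q a b ≠ 1

/-- `(B, β)` is a Schellekens pair for `(A, q)`: `β` is symmetric, multiplicative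
in each argument, and `β(b,b) = q(b)` on the subgroup `B`. -/
def IsSchellekens {A : Type*} [CommGroup A] (q : A → ℂˣ) (B : Subgroup A)
    (β : B → B → ℂˣ) : Prop :=
  (∀ b c : B, β b c = β c b) ∧
  (∀ b c d : B, β (b * c) d = β b d * β c d) ∧
  (∀ b c d : B, β b (c * d) = β b c * β b d) ∧
  (∀ b : B, β b b = q (b : A))

/-- `Γ(B,β) = {(a, a⁻¹ b) | a ∈ A, b ∈ B, σ(c,a) = β(c,b) ∀ c ∈ B}` as a subset of `A × A`. -/
def GammaSet {A : Type*} [CommGroup A] (q : A → ℂˣ) (B : Subgroup A)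
    (β : B → B → ℂˣ) : Set (A × A) :=
  {z | ∃ b : B, z.2 = z.1⁻¹ * (b : A) ∧ ∀ c : B, qSigma q (c : A) z.1 = β c b}

/-- The bicharacter `τ((a,b),(c,d)) = σ(a,c) σ(b,d)⁻¹` on `A × A`
associated to the quadratic function `q × q⁻¹`. -/
def qTau {A : Type*} [CommGroup A] (q : A → ℂˣ) (z w : A × A) : ℂˣ :=
  qSigma q z.1 w.1 * (qSigma q z.2 w.2)⁻¹



lemma card_dual (G : Type*) [CommGroup G] [Finite G] :
    Nat.card (G →* ℂˣ) = Nat.card G := by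
  haveI : NeZero ((Monoid.exponent G : ℂ)) :=
    ⟨Nat.cast_ne_zero.mpr (Monoid.exponent_ne_zero_of_finite)⟩
  exact Nat.card_congr
    (CommGroup.monoidHom_mulEquiv_of_hasEnoughRootsOfUnity G ℂ).some.toEquiv

lemma finite_dual (G : Type*) [CommGroup G] [Finite G] : Finite (G →* ℂˣ) := by
  haveI : NeZero ((Monoid.exponent G : ℂ)) :=
    ⟨Nat.cast_ne_zero.mpr (Monoid.exponent_ne_zero_of_finite)⟩
  exact Finite.of_equiv G
    (CommGroup.monoidHom_mulEquiv_of_hasEnoughRootsOfUnity G ℂ).some.toEquiv.symm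

lemma res_surjective {A : Type*} [CommGroup A] [Finite A] (B : Subgroup A) :
    Function.Surjective (fun φ : A →* ℂˣ => φ.comp B.subtype) := by
  haveI : Finite (A →* ℂˣ) := finite_dual A
  haveI : Finite ((A ⧸ B) →* ℂˣ) := finite_dual (A ⧸ B)
  haveI : Finite (B →* ℂˣ) := finite_dual B
  set res : (A →* ℂˣ) →* (B →* ℂˣ) :=
    { toFun := fun φ => φ.comp B.subtype
      map_one' := rfl
      map_mul' := fun _ _ => rfl } with hres
  -- kernel injects into dual of quotient
  have hkerinj : Function.Injective
      (fun φ : res.ker => QuotientGroup.lift B (φ : A →* ℂˣ)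
        (fun b hb => by
          have := φ.2
          simp only [MonoidHom.mem_ker, hres] at this
          have := congrArg (fun f : B →* ℂˣ => f ⟨b, hb⟩) this
          simpa using this)) := by
    intro φ ψ hfψ
    ext a
    have := congrArg (fun f : (A ⧸ B) →* ℂˣ => f ((a : A) : A ⧸ B)) hfψ
    exact congrArg Units.val (by simpa using this)
  have hker : Nat.card res.ker ≤ Nat.card (A ⧸ B) := by
    calc Nat.card res.ker ≤ Nat.card ((A ⧸ B) →* ℂˣ) :=
          Nat.card_le_card_of_injective _ hkerinj
      _ = Nat.card (A ⧸ B) := card_dual _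
  have h1 : Nat.card (A →* ℂˣ) = Nat.card ((A →* ℂˣ) ⧸ res.ker) * Nat.card res.ker :=
    Subgroup.card_eq_card_quotient_mul_card_subgroup _
  have h2 : Nat.card ((A →* ℂˣ) ⧸ res.ker) = Nat.card res.range :=
    Nat.card_congr (QuotientGroup.quotientKerEquivRange res).toEquiv
  have h3 : Nat.card A = Nat.card (A ⧸ B) * Nat.card B :=
    Subgroup.card_eq_card_quotient_mul_card_subgroup B
  have h4 : Nat.card res.range * Nat.card res.ker = Nat.card (A ⧸ B) * Nat.card B := by
    rw [← h3, ← h2, ← h1, card_dual]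
  have hrange : Nat.card (B →* ℂˣ) ≤ Nat.card res.range := by
    rw [card_dual]
    have hq : 0 < Nat.card (A ⧸ B) := Nat.card_pos
    have h5 : Nat.card B * Nat.card (A ⧸ B) ≤ Nat.card res.range * Nat.card (A ⧸ B) := by
      calc Nat.card B * Nat.card (A ⧸ B) = Nat.card res.range * Nat.card res.ker := by
            rw [mul_comm]; exact h4.symm
        _ ≤ Nat.card res.range * Nat.card (A ⧸ B) := Nat.mul_le_mul_left _ hker
    exact Nat.le_of_mul_le_mul_right h5 hq
  have : res.range = ⊤ := by
    apply Subgroup.eq_top_of_card_eq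
    have hle : Nat.card res.range ≤ Nat.card (B →* ℂˣ) :=
      Nat.card_le_card_of_injective _ res.range.subtype_injective
    omega
  intro χ
  have : χ ∈ res.range := this ▸ Subgroup.mem_top χ
  obtain ⟨φ, hφ⟩ := this
  exact ⟨φ, hφ⟩

lemma sigma_comm {A : Type*} [CommGroup A] (q : A → ℂˣ) (a b : A) :
    qSigma q a b = qSigma q b a := by
  unfold qSigma; rw [mul_comm a b, mul_right_comm]

lemma sigma_one_left {A : Type*} [CommGroup A] {q : A → ℂˣ} (hq : IsQuadratic q) (a : A) :
    qSigma q 1 a = 1 := by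
  have := hq.2.1 1 1 a
  rw [one_mul] at this
  exact (left_eq_mul.mp this)

lemma exists_rep {A : Type*} [CommGroup A] [Finite A] {q : A → ℂˣ}
    (hq : IsQuadratic q) (hnd : IsNondeg q) (B : Subgroup A) (χ : B →* ℂˣ) :
    ∃ a : A, ∀ c : B, qSigma q (c : A) a = χ c := by
  set Φ : A →* (A →* ℂˣ) :=
    { toFun := fun a =>
        { toFun := fun c => qSigma q c a
          map_one' := sigma_one_left hq a
          map_mul' := fun c d => hq.2.1 c d a }
      map_one' := by
        ext c
        show (qSigma q c 1 : ℂ) = ((1 : ℂˣ) : ℂ)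
        exact congrArg Units.val (by rw [sigma_comm]; exact sigma_one_left hq c)
      map_mul' := fun a b => by
        ext c
        exact congrArg Units.val (hq.2.2 c a b) } with hΦ
  have hinj : Function.Injective Φ := by
    rw [injective_iff_map_eq_one]
    intro a ha
    by_contra hne
    obtain ⟨b, hb⟩ := hnd a hne
    apply hb
    have := congrArg (fun f : A →* ℂˣ => f b) ha
    simp only [hΦ, MonoidHom.coe_mk, OneHom.coe_mk, MonoidHom.one_apply] at this
    rw [sigma_comm]; exact this
  haveI : Finite (A →* ℂˣ) := finite_dual A
  have hbij : Function.Bijective Φ := by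
    rw [Nat.bijective_iff_injective_and_card]
    exact ⟨hinj, (card_dual A).symm⟩
  obtain ⟨φ, hφ⟩ := res_surjective B χ
  obtain ⟨a, ha⟩ := hbij.2 φ
  refine ⟨a, fun c => ?_⟩
  have h1 := congrArg (fun f : A →* ℂˣ => f (c : A)) ha
  have h2 := congrArg (fun f : B →* ℂˣ => f c) hφ
  simp only [hΦ, MonoidHom.coe_mk, OneHom.coe_mk] at h1
  simp only [MonoidHom.comp_apply, Subgroup.coe_subtype] at h2
  rw [h1, ← h2]

lemma beta_one {A : Type*} [CommGroup A] {q : A → ℂˣ} {B : Subgroup A}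
    {β : B → B → ℂˣ} (hβ : IsSchellekens q B β) (b : B) : β 1 b = 1 := by
  have := hβ.2.1 1 1 b
  rw [one_mul] at this
  exact left_eq_mul.mp this

/-- The character `c ↦ β c b` on `B`. -/
def betaChar {A : Type*} [CommGroup A] {q : A → ℂˣ} {B : Subgroup A}
    {β : B → B → ℂˣ} (hβ : IsSchellekens q B β) (b : B) : B →* ℂˣ where
  toFun := fun c => β c b
  map_one' := beta_one hβ b
  map_mul' := fun c d => hβ.2.1 c d b

lemma gamma_le {A : Type*} [CommGroup A] [Finite A]
    {q : A → ℂˣ} (hq : IsQuadratic q) (hnd : IsNondeg q)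
    {B B' : Subgroup A} {β : B → B → ℂˣ} {β' : B' → B' → ℂˣ}
    (hβ : IsSchellekens q B β)
    (h : GammaSet q B β ⊆ GammaSet q B' β') : B ≤ B' := by
  intro b hb
  obtain ⟨a, ha⟩ := exists_rep hq hnd B (betaChar hβ ⟨b, hb⟩)
  have hmem : ((a, a⁻¹ * b) : A × A) ∈ GammaSet q B β := ⟨⟨b, hb⟩, rfl, ha⟩
  obtain ⟨b', hb'1, -⟩ := h hmem
  have hbb : b = (b' : A) := mul_left_cancel hb'1
  rw [hbb]
  exact b'.2

/-- the assignment `(B,β) ↦ Γ(B,β)` is injective on Schellekens pairs. -/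
theorem gamma_injective {A : Type*} [CommGroup A] [Fintype A]
    (q : A → ℂˣ) (hq : IsQuadratic q) (hnd : IsNondeg q)
    (B B' : Subgroup A) (β : B → B → ℂˣ) (β' : B' → B' → ℂˣ)
    (hβ : IsSchellekens q B β) (hβ' : IsSchellekens q B' β')
    (h : GammaSet q B β = GammaSet q B' β') :
    B = B' ∧ HEq β β' := by
  have hBB' : B = B' :=
    le_antisymm (gamma_le hq hnd hβ h.le) (gamma_le hq hnd hβ' h.ge)
  subst hBB'
  refine ⟨rfl, heq_of_eq ?_⟩
  funext b c
  obtain ⟨a, ha⟩ := exists_rep hq hnd B (betaChar hβ c)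
  have hmem : ((a, a⁻¹ * c) : A × A) ∈ GammaSet q B β := ⟨c, rfl, ha⟩
  rw [h] at hmem
  obtain ⟨c₂, hc1, hc2⟩ := hmem
  have hcc : c = c₂ := Subtype.ext (mul_left_cancel hc1)
  subst hcc
  calc β b c = qSigma q (b : A) a := (ha b).symm
    _ = β' b c := hc2 b
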